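/- For all x ∈ ℂ and τ ∈ ℂ with Im τ > 0, one has the fourth-order classical identity θ(x, τ)²·θ(0, τ)² = θ_{1/2,0}(x, τ)²·θ_{1/2,0}(0, τ)² + θ_{0,1/2}(x, τ)²·θ_{0,1/2}(0, τ)². -/

import Mathlib

open Complex

/-- The Jacobi theta function `θ(x, τ) = ∑_{m ∈ ℤ} exp(πiτm² + 2πimx)`. -/
noncomputable def theta (x τ : ℂ) : ℂ :=
  ∑' m : ℤ, Complex.exp (Real.pi * Complex.I * τ * (m : ℂ) ^ 2
    + 2 * Real.pi * Complex.I * (m : ℂ) * x)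

/-- The theta function with real characteristics `(a, b)`:
`θ_{a,b}(x, τ) = ∑_{m ∈ ℤ} exp(πiτ(m+a)² + 2πi(m+a)(x+b))`. -/
noncomputable def thetaChar (a b : ℝ) (x τ : ℂ) : ℂ :=
  ∑' m : ℤ, Complex.exp (Real.pi * Complex.I * τ * ((m : ℂ) + (a : ℂ)) ^ 2
    + 2 * Real.pi * Complex.I * ((m : ℂ) + (a : ℂ)) * (x + (b : ℂ)))
namespace ThetaAux

noncomputable def lt' (σ z : ℂ) (m : ℤ) : ℂ :=
  Complex.exp (Real.pi * Complex.I * σ * (m : ℂ) ^ 2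
    + 2 * Real.pi * Complex.I * (m : ℂ) * z)

noncomputable def kt' (σ z : ℂ) (m : ℤ) : ℂ :=
  Complex.exp (Real.pi * Complex.I * σ * ((m : ℂ) + 1/2) ^ 2
    + 2 * Real.pi * Complex.I * ((m : ℂ) + 1/2) * z)

lemma lt_eq_jt (σ z : ℂ) (m : ℤ) : lt' σ z m = jacobiTheta₂_term m z σ := by
  rw [lt', jacobiTheta₂_term]; congr 1; ring

lemma kt_eq_jt (σ z : ℂ) (m : ℤ) :
    kt' σ z m = Complex.exp (Real.pi * Complex.I * σ / 4 + Real.pi * Complex.I * z)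
      * jacobiTheta₂_term m (z + σ/2) σ := by
  rw [kt', jacobiTheta₂_term, ← Complex.exp_add]; congr 1; ring

lemma summable_norm_jt (z : ℂ) {σ : ℂ} (hσ : 0 < σ.im) :
    Summable fun m : ℤ => ‖jacobiTheta₂_term m z σ‖ := by
  apply Summable.of_norm_bounded (summable_pow_mul_jacobiTheta₂_term_bound |z.im| hσ 0)
  intro n
  simpa only [pow_zero, one_mul, norm_norm] using
    norm_jacobiTheta₂_term_le hσ le_rfl le_rfl n

lemma summable_norm_lt (z : ℂ) {σ : ℂ} (hσ : 0 < σ.im) :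
    Summable fun m : ℤ => ‖lt' σ z m‖ := by
  simp only [lt_eq_jt]; exact summable_norm_jt z hσ

lemma summable_norm_kt (z : ℂ) {σ : ℂ} (hσ : 0 < σ.im) :
    Summable fun m : ℤ => ‖kt' σ z m‖ := by
  simp only [kt_eq_jt, norm_mul]
  exact (summable_norm_jt (z + σ/2) hσ).mul_left _

lemma hasSum_lt (z : ℂ) {σ : ℂ} (hσ : 0 < σ.im) : HasSum (lt' σ z) (theta z σ) := by
  have hs : Summable (lt' σ z) := by
    refine (summable_congr fun m => (lt_eq_jt σ z m)).mpr ?_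
    exact (summable_jacobiTheta₂_term_iff z σ).mpr hσ
  exact hs.hasSum

lemma hasSum_kt (z : ℂ) {σ : ℂ} (hσ : 0 < σ.im) :
    HasSum (kt' σ z) (thetaChar (1/2) 0 z σ) := by
  have hs : Summable (kt' σ z) := by
    refine (summable_congr fun m => (kt_eq_jt σ z m)).mpr ?_
    exact ((summable_jacobiTheta₂_term_iff (z + σ/2) σ).mpr hσ).mul_left _
  have h : thetaChar (1/2) 0 z σ = ∑' m : ℤ, kt' σ z m := by
    rw [thetaChar]
    refine tsum_congr fun m => ?_
    rw [kt']; norm_num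
  rw [h]; exact hs.hasSum

lemma thetaChar_b_half (z σ : ℂ) : thetaChar 0 (1/2) z σ = theta (z + 1/2) σ := by
  rw [thetaChar, theta]
  refine tsum_congr fun m => ?_
  congr 1; push_cast; ring

lemma hasSum_sum_elim {ι κ : Type*} {f : ι → ℂ} {g : κ → ℂ} {a b : ℂ}
    (hf : HasSum f a) (hg : HasSum g b) : HasSum (Sum.elim f g) (a + b) := by
  have h1 : HasSum (Sum.elim f (fun _ : κ => (0 : ℂ))) a := by
    refine (Function.Injective.hasSum_iff Sum.inl_injective ?_).mp hf
    rintro (x | y) hx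
    · exact absurd ⟨x, rfl⟩ hx
    · rfl
  have h2 : HasSum (Sum.elim (fun _ : ι => (0 : ℂ)) g) b := by
    refine (Function.Injective.hasSum_iff Sum.inr_injective ?_).mp hg
    rintro (x | y) hx
    · rfl
    · exact absurd ⟨y, rfl⟩ hx
  have h3 := h1.add h2
  convert h3 using 1
  funext p; rcases p with x | y <;> simp

noncomputable def e1 : (ℤ × ℤ) ⊕ (ℤ × ℤ) ≃ ℤ × ℤ :=
  Equiv.ofBijective
    (Sum.elim (fun p => (p.1 + p.2, p.1 - p.2)) (fun p => (p.1 + p.2 + 1, p.1 - p.2)))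
    (by
      constructor
      · rintro (⟨a, b⟩ | ⟨a, b⟩) (⟨c, d⟩ | ⟨c, d⟩) h <;>
          simp only [Sum.elim_inl, Sum.elim_inr, Prod.mk.injEq, Sum.inl.injEq,
            Sum.inr.injEq] at h ⊢ <;> omega
      · rintro ⟨m, n⟩
        rcases Int.even_or_odd (m + n) with ⟨s, hs⟩ | ⟨s, hs⟩
        · exact ⟨Sum.inl (s, m - s), by simp only [Sum.elim_inl, Prod.mk.injEq]; omega⟩
        · exact ⟨Sum.inr (s, m - s - 1), by simp only [Sum.elim_inr, Prod.mk.injEq]; omega⟩)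

lemma key {f g A B C D : ℤ → ℂ} {S T P Q R W : ℂ}
    (hf : HasSum f S) (hg : HasSum g T)
    (hA : HasSum A P) (hB : HasSum B Q) (hC : HasSum C R) (hD : HasSum D W)
    (hnA : Summable fun m => ‖A m‖) (hnB : Summable fun m => ‖B m‖)
    (hnC : Summable fun m => ‖C m‖) (hnD : Summable fun m => ‖D m‖)
    (h1 : ∀ s t : ℤ, A s * B t = f (s + t) * g (s - t))
    (h2 : ∀ s t : ℤ, C s * D t = f (s + t + 1) * g (s - t)) :
    S * T = P * Q + R * W := by
  have hAB : HasSum (fun p : ℤ × ℤ => A p.1 * B p.2) (P * Q) :=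
    hA.mul hB (summable_mul_of_summable_norm hnA hnB)
  have hCD : HasSum (fun p : ℤ × ℤ => C p.1 * D p.2) (R * W) :=
    hC.mul hD (summable_mul_of_summable_norm hnC hnD)
  have hsplit := hasSum_sum_elim hAB hCD
  have hFG : HasSum (fun p : ℤ × ℤ => f p.1 * g p.2) (P * Q + R * W) := by
    refine (e1.hasSum_iff).mp ?_
    convert hsplit using 1
    funext p
    rcases p with ⟨s, t⟩ | ⟨s, t⟩
    · exact (h1 s t).symm
    · exact (h2 s t).symm
  exact hf.mul_eq hg hFG

variable {τ : ℂ}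

lemma two_tau_im (hτ : 0 < τ.im) : 0 < (2 * τ).im := by
  rw [Complex.mul_im]
  norm_num
  exact hτ

lemma P3 (x y : ℂ) (hτ : 0 < τ.im) :
    theta x τ * theta y τ =
      theta (x + y) (2 * τ) * theta (x - y) (2 * τ)
        + thetaChar (1/2) 0 (x + y) (2 * τ) * thetaChar (1/2) 0 (x - y) (2 * τ) := by
  have hσ := two_tau_im hτ
  refine key (hasSum_lt x hτ) (hasSum_lt y hτ)
    (hasSum_lt (x + y) hσ) (hasSum_lt (x - y) hσ)
    (hasSum_kt (x + y) hσ) (hasSum_kt (x - y) hσ)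
    (summable_norm_lt _ hσ) (summable_norm_lt _ hσ)
    (summable_norm_kt _ hσ) (summable_norm_kt _ hσ) ?_ ?_
  · intro s t; simp only [lt', ← Complex.exp_add]; congr 1; push_cast; ring
  · intro s t; simp only [lt', kt', ← Complex.exp_add]; congr 1; push_cast; ring

lemma P4 (x y : ℂ) (hτ : 0 < τ.im) :
    theta (x + 1/2) τ * theta (y + 1/2) τ =
      theta (x + y) (2 * τ) * theta (x - y) (2 * τ)
        - thetaChar (1/2) 0 (x + y) (2 * τ) * thetaChar (1/2) 0 (x - y) (2 * τ) := by
  have hσ := two_tau_im hτ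
  have h := key (hasSum_lt (x + 1/2) hτ) (hasSum_lt (y + 1/2) hτ)
    (hasSum_lt (x + y) hσ) (hasSum_lt (x - y) hσ)
    ((hasSum_kt (x + y) hσ).neg) (hasSum_kt (x - y) hσ)
    (summable_norm_lt _ hσ) (summable_norm_lt _ hσ)
    (by simpa only [norm_neg] using summable_norm_kt (x + y) hσ)
    (summable_norm_kt _ hσ) ?_ ?_
  · rw [h]; ring
  · intro s t
    rw [show lt' τ (x + 1/2) (s + t) * lt' τ (y + 1/2) (s - t)
        = lt' (2 * τ) (x + y) s * lt' (2 * τ) (x - y) t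
          * Complex.exp ((s : ℂ) * (2 * (Real.pi : ℂ) * I)) from by
      simp only [lt', ← Complex.exp_add]; congr 1; push_cast; ring]
    rw [Complex.exp_int_mul_two_pi_mul_I, mul_one]
  · intro s t
    rw [show lt' τ (x + 1/2) (s + t + 1) * lt' τ (y + 1/2) (s - t)
        = kt' (2 * τ) (x + y) s * kt' (2 * τ) (x - y) t
          * (Complex.exp ((s : ℂ) * (2 * (Real.pi : ℂ) * I)) * Complex.exp ((Real.pi : ℂ) * I))
          from by
      simp only [lt', kt', ← Complex.exp_add]; congr 1; push_cast; ring]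
    rw [Complex.exp_int_mul_two_pi_mul_I, Complex.exp_pi_mul_I]
    ring

lemma P2 (x y : ℂ) (hτ : 0 < τ.im) :
    thetaChar (1/2) 0 x τ * thetaChar (1/2) 0 y τ =
      thetaChar (1/2) 0 (x + y) (2 * τ) * theta (x - y) (2 * τ)
        + theta (x + y) (2 * τ) * thetaChar (1/2) 0 (x - y) (2 * τ) := by
  have hσ := two_tau_im hτ
  have hC : HasSum (fun s : ℤ => lt' (2 * τ) (x + y) (s + 1)) (theta (x + y) (2 * τ)) := by
    have := ((Equiv.addRight (1 : ℤ)).hasSum_iff).mpr (hasSum_lt (x + y) hσ)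
    simpa [Function.comp_def] using this
  have hnC : Summable (fun s : ℤ => ‖lt' (2 * τ) (x + y) (s + 1)‖) := by
    have := ((Equiv.addRight (1 : ℤ)).summable_iff).mpr (summable_norm_lt (x + y) hσ)
    simpa [Function.comp_def] using this
  refine key (hasSum_kt x hτ) (hasSum_kt y hτ)
    (hasSum_kt (x + y) hσ) (hasSum_lt (x - y) hσ)
    hC (hasSum_kt (x - y) hσ)
    (summable_norm_kt _ hσ) (summable_norm_lt _ hσ)
    hnC (summable_norm_kt _ hσ) ?_ ?_
  · intro s t; simp only [lt', kt', ← Complex.exp_add]; congr 1; push_cast; ring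
  · intro s t; simp only [lt', kt', ← Complex.exp_add]; congr 1; push_cast; ring

end ThetaAux

open ThetaAux in
theorem stmt_13 (x τ : ℂ) (hτ : 0 < τ.im) :
    theta x τ ^ 2 * theta 0 τ ^ 2 =
      thetaChar (1/2) 0 x τ ^ 2 * thetaChar (1/2) 0 0 τ ^ 2
        + thetaChar 0 (1/2) x τ ^ 2 * thetaChar 0 (1/2) 0 τ ^ 2 := by
  have h1 := P3 x x hτ
  have h2 := P3 (0 : ℂ) 0 hτ
  have h3 := P4 x x hτ
  have h4 := P4 (0 : ℂ) 0 hτ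
  have h5 := P2 x x hτ
  have h6 := P2 (0 : ℂ) 0 hτ
  simp only [sub_self, add_zero, sub_zero] at h1 h2 h3 h4 h5 h6
  rw [thetaChar_b_half x τ, thetaChar_b_half 0 τ]
  simp only [pow_two]
  rw [h1, h2, h3, h4, h5, h6]
  ring
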